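/- For every n ≥ 1, the assignment π · I_w = (−1)^{inv_w(π)} I_{πwπ⁻¹}, for π ∈ Sₙ and w an involution in Sₙ, defines a representation of Sₙ on Vₙ; that is, the map sending π ∈ Sₙ to the linear endomorphism of Vₙ determined on basis vectors by I_w ↦ (−1)^{inv_w(π)} I_{πwπ⁻¹} is a group homomorphism from Sₙ to GL(Vₙ). -/

import Mathlib

open Equiv

/-- The set of involutions in `Sₙ` (elements `w` with `w² = id`). -/
abbrev SymInv (n : ℕ) : Type := {w : Equiv.Perm (Fin n) // w * w = 1}

/-- `Vₙ`: the complex vector space with basis `{I_w : w an involution in Sₙ}`. -/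
abbrev Vn (n : ℕ) : Type := SymInv n →₀ ℂ

/-- `inv_w(π) = |Inv(π) ∩ Pair(w)|`. -/
noncomputable def invw (n : ℕ) (w π : Equiv.Perm (Fin n)) : ℕ :=
  {p : Fin n × Fin n | p.1 < p.2 ∧ w p.1 = p.2 ∧ π p.2 < π p.1}.ncard

/-- Conjugation of an involution by a permutation: `π w π⁻¹`. -/
def conjInv (n : ℕ) (π : Equiv.Perm (Fin n)) (w : SymInv n) : SymInv n :=
  ⟨π * w.1 * π⁻¹, by
    have h : π * w.1 * π⁻¹ * (π * w.1 * π⁻¹) = π * (w.1 * w.1) * π⁻¹ := by group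
    rw [h, w.2, mul_one, mul_inv_cancel]⟩

/-- The linear endomorphism of `Vₙ` determined on basis vectors by
`I_w ↦ (−1)^{inv_w(π)} I_{π w π⁻¹}`. -/
noncomputable def rho (n : ℕ) (π : Equiv.Perm (Fin n)) : Vn n →ₗ[ℂ] Vn n :=
  Finsupp.lift (Vn n) ℂ (SymInv n)
    (fun w => ((-1 : ℂ) ^ invw n w.1 π) • Finsupp.single (conjInv n π w) (1 : ℂ))

lemma invw_eq_card (n : ℕ) (w π : Equiv.Perm (Fin n)) :
    invw n w π = (Finset.univ.filter
      (fun p : Fin n × Fin n => p.1 < p.2 ∧ w p.1 = p.2 ∧ π p.2 < π p.1)).card := by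
  rw [invw, ← Set.ncard_coe_finset]
  congr 1
  ext p
  simp

lemma neg_one_pow_invw (n : ℕ) (w π : Equiv.Perm (Fin n)) :
    ((-1 : ℂ) ^ invw n w π) =
      ∏ p ∈ Finset.univ.filter (fun p : Fin n × Fin n => p.1 < p.2 ∧ w p.1 = p.2),
        (if π p.2 < π p.1 then (-1 : ℂ) else 1) := by
  rw [← Finset.prod_filter, Finset.filter_filter, invw_eq_card, Finset.prod_const]
  congr 2
  ext p
  simp [Finset.mem_filter, and_assoc]

/-- sorted image of a pair under σ -/
def gmap (n : ℕ) (σ : Equiv.Perm (Fin n)) (p : Fin n × Fin n) : Fin n × Fin n :=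
  if σ p.1 < σ p.2 then (σ p.1, σ p.2) else (σ p.2, σ p.1)

lemma key (n : ℕ) (w : Equiv.Perm (Fin n)) (hw : w * w = 1) (π σ : Equiv.Perm (Fin n)) :
    ((-1 : ℂ) ^ invw n w (π * σ)) =
      ((-1 : ℂ) ^ invw n (σ * w * σ⁻¹) π) * ((-1 : ℂ) ^ invw n w σ) := by
  have hwi : ∀ i, w (w i) = i := fun i => by
    have := DFunLike.congr_fun hw i
    simpa [Equiv.Perm.mul_apply] using this
  rw [neg_one_pow_invw, neg_one_pow_invw, neg_one_pow_invw]
  rw [show ∏ p ∈ Finset.univ.filter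
        (fun p : Fin n × Fin n => p.1 < p.2 ∧ (σ * w * σ⁻¹) p.1 = p.2),
        (if π p.2 < π p.1 then (-1 : ℂ) else 1)
      = ∏ p ∈ Finset.univ.filter
        (fun p : Fin n × Fin n => p.1 < p.2 ∧ w p.1 = p.2),
        (if π ((gmap n σ p).2) < π ((gmap n σ p).1) then (-1 : ℂ) else 1) from ?_]
  · rw [← Finset.prod_mul_distrib]
    apply Finset.prod_congr rfl
    intro p hp
    simp only [Finset.mem_filter] at hp
    obtain ⟨-, hlt, -⟩ := hp
    have hne : σ p.1 ≠ σ p.2 := fun h => absurd (σ.injective h) (ne_of_lt hlt)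
    have hne' : π (σ p.1) ≠ π (σ p.2) := fun h => hne (π.injective h)
    by_cases hσ : σ p.1 < σ p.2
    · simp only [gmap, hσ, if_pos]
      rw [Equiv.Perm.mul_apply, Equiv.Perm.mul_apply]
      rw [if_neg (not_lt.mpr (le_of_lt hσ))]
      ring
    · have hσ' : σ p.2 < σ p.1 := lt_of_le_of_ne (not_lt.mp hσ) (Ne.symm hne)
      rw [show gmap n σ p = (σ p.2, σ p.1) from by simp [gmap, hσ]]
      rw [Equiv.Perm.mul_apply, Equiv.Perm.mul_apply]
      rw [if_pos hσ']
      by_cases hπ : π (σ p.2) < π (σ p.1)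
      · rw [if_pos hπ, if_neg (not_lt.mpr (le_of_lt hπ))]; ring
      · rw [if_neg hπ, if_pos (lt_of_le_of_ne (not_lt.mp hπ) hne')]; ring
  · symm
    apply Finset.prod_nbij' (i := gmap n σ) (j := gmap n σ⁻¹)
    · intro p hp
      simp only [Finset.mem_filter] at hp ⊢
      obtain ⟨-, hlt, hw1⟩ := hp
      have hw2 : w p.2 = p.1 := by rw [← hw1, hwi]
      refine ⟨Finset.mem_univ _, ?_⟩
      by_cases hσ : σ p.1 < σ p.2
      · simp [gmap, hσ, Equiv.Perm.mul_apply, hw1]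
      · have hne : σ p.1 ≠ σ p.2 := fun h => absurd (σ.injective h) (ne_of_lt hlt)
        have hσ' : σ p.2 < σ p.1 := lt_of_le_of_ne (not_lt.mp hσ) (Ne.symm hne)
        simp [gmap, hσ, hσ', Equiv.Perm.mul_apply, hw2]
    · intro q hq
      simp only [Finset.mem_filter] at hq ⊢
      obtain ⟨-, hlt, hq1⟩ := hq
      have hq1' : w (σ⁻¹ q.1) = σ⁻¹ q.2 := by
        have := hq1
        simp only [Equiv.Perm.mul_apply] at this
        rw [← this]
        simp
      have hq2' : w (σ⁻¹ q.2) = σ⁻¹ q.1 := by rw [← hq1', hwi]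
      refine ⟨Finset.mem_univ _, ?_⟩
      by_cases hσ : σ⁻¹ q.1 < σ⁻¹ q.2
      · rw [gmap, if_pos hσ]
        exact ⟨hσ, hq1'⟩
      · have hne : σ⁻¹ q.1 ≠ σ⁻¹ q.2 := fun h => absurd (σ⁻¹.injective h) (ne_of_lt hlt)
        have hσ' : σ⁻¹ q.2 < σ⁻¹ q.1 := lt_of_le_of_ne (not_lt.mp hσ) (Ne.symm hne)
        rw [gmap, if_neg hσ]
        exact ⟨hσ', hq2'⟩
    · intro p hp
      simp only [Finset.mem_filter] at hp
      obtain ⟨-, hlt, -⟩ := hp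
      by_cases hσ : σ p.1 < σ p.2
      · simp [gmap, hσ, hlt, not_lt.mpr (le_of_lt hlt)]
      · simp only [gmap, hσ, if_neg]
        simp [gmap, not_lt.mpr (le_of_lt hlt), hlt]
    · intro q hq
      simp only [Finset.mem_filter] at hq
      obtain ⟨-, hlt, -⟩ := hq
      by_cases hσ : σ⁻¹ q.1 < σ⁻¹ q.2
      · rw [show gmap n σ⁻¹ q = (σ⁻¹ q.1, σ⁻¹ q.2) from if_pos hσ]
        simp [gmap, hσ, hlt, not_lt.mpr (le_of_lt hlt)]
      · rw [show gmap n σ⁻¹ q = (σ⁻¹ q.2, σ⁻¹ q.1) from if_neg hσ]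
        simp [gmap, not_lt.mpr (le_of_lt hlt), hlt]
    · intro p hp
      rfl

lemma rho_single (n : ℕ) (π : Equiv.Perm (Fin n)) (w : SymInv n) :
    rho n π (Finsupp.single w (1 : ℂ)) =
      ((-1 : ℂ) ^ invw n w.1 π) • Finsupp.single (conjInv n π w) (1 : ℂ) := by
  rw [rho, Finsupp.lift_apply, Finsupp.sum_single_index (by simp), one_smul]

lemma invw_one (n : ℕ) (w : Equiv.Perm (Fin n)) : invw n w 1 = 0 := by
  rw [invw]
  have he : {p : Fin n × Fin n | p.1 < p.2 ∧ w p.1 = p.2 ∧ (1 : Equiv.Perm (Fin n)) p.2 < (1 : Equiv.Perm (Fin n)) p.1} = ∅ := by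
    ext p
    simp only [Set.mem_empty_iff_false, iff_false, Set.mem_setOf_eq, Equiv.Perm.one_apply]
    rintro ⟨h1, -, h2⟩
    exact absurd h1 (not_lt.mpr (le_of_lt h2))
  rw [he, Set.ncard_empty]

/-- The map `π ↦ ρ(π)` is a group homomorphism from `Sₙ` to `GL(Vₙ)`:
it is unital and multiplicative (and hence lands in invertible endomorphisms). -/
theorem rho_isGroupHom (n : ℕ) (hn : 1 ≤ n) :
    rho n 1 = LinearMap.id ∧
      ∀ π σ : Equiv.Perm (Fin n), rho n (π * σ) = (rho n π) ∘ₗ (rho n σ) := by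
  have hsingle : ∀ (w : SymInv n) (b : ℂ),
      Finsupp.single w b = b • Finsupp.single w (1 : ℂ) := by
    intro w b
    rw [Finsupp.smul_single, smul_eq_mul, mul_one]
  constructor
  · apply Finsupp.lhom_ext
    intro w b
    have hc : conjInv n 1 w = w := by
      apply Subtype.ext
      simp [conjInv]
    rw [hsingle w b, map_smul, rho_single, invw_one, LinearMap.id_apply, hc]
    simp
  · intro π σ
    apply Finsupp.lhom_ext
    intro w b
    have hc : conjInv n (π * σ) w = conjInv n π (conjInv n σ w) := by
      apply Subtype.ext
      simp only [conjInv]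
      group
    rw [hsingle w b, map_smul, map_smul]
    congr 1
    rw [rho_single, LinearMap.comp_apply, rho_single, map_smul, rho_single, hc,
      key n w.1 w.2 π σ, smul_smul]
    congr 1
    show ((-1 : ℂ) ^ invw n (σ * w.1 * σ⁻¹) π) * ((-1 : ℂ) ^ invw n w.1 σ) = _
    rw [mul_comm]
    rfl
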